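/- arXiv:2409.16832 — 5 statements merged into one kernel-verified Lean document; each statement's English description precedes it below -/
import Mathlib

section
/- Let S be a finite nonempty set and N, D : S → ℝ with D(a) > 0 for all a. Define γ* = min over a in S of N(a)/D(a). Then for any γ ∈ ℝ, min over a of (N(a) − γ·D(a)) = 0 if and only if γ = γ*. -/
/-- Dinkelbach equivalence: the optimal ratio value γ* is the unique root of
F(γ) = min_a (N(a) − γ·D(a)). -/
theorem dinkelbach_root_iff {S : Type*} [Fintype S] [Nonempty S]
    (N D : S → ℝ) (hD : ∀ a, 0 < D a) (γ : ℝ) :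
    Finset.univ.inf' Finset.univ_nonempty (fun a => N a - γ * D a) = 0 ↔
      γ = Finset.univ.inf' Finset.univ_nonempty (fun a => N a / D a) := by
  constructor
  · intro h
    -- F(γ) = 0 : all terms ≥ 0 and some term = 0
    have hle : ∀ a : S, 0 ≤ N a - γ * D a := by
      intro a
      have := Finset.inf'_le (fun a => N a - γ * D a) (Finset.mem_univ a)
      linarith [h ▸ this]
    obtain ⟨a0, -, ha0⟩ := Finset.exists_mem_eq_inf' (s := (Finset.univ : Finset S))
      Finset.univ_nonempty (fun a => N a - γ * D a)
    have ha0' : N a0 - γ * D a0 = 0 := by rw [← h, ha0]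
    have hγ : γ = N a0 / D a0 := by
      rw [eq_div_iff (hD a0).ne']
      linarith
    apply le_antisymm
    · rw [Finset.le_inf'_iff]
      intro a _
      rw [le_div_iff₀ (hD a)]
      linarith [hle a]
    · rw [hγ]
      exact Finset.inf'_le _ (Finset.mem_univ a0)
  · intro h
    subst h
    set γ := Finset.univ.inf' Finset.univ_nonempty (fun a => N a / D a) with hγ
    apply le_antisymm
    · obtain ⟨a0, -, ha0⟩ := Finset.exists_mem_eq_inf' (s := (Finset.univ : Finset S))
        Finset.univ_nonempty (fun a => N a / D a)
      have : N a0 - γ * D a0 = 0 := by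
        have : γ = N a0 / D a0 := ha0
        rw [this, div_mul_cancel₀ _ (hD a0).ne']
        ring
      calc Finset.univ.inf' Finset.univ_nonempty (fun a => N a - γ * D a)
          ≤ N a0 - γ * D a0 := Finset.inf'_le _ (Finset.mem_univ a0)
        _ = 0 := this
    · rw [Finset.le_inf'_iff]
      intro a _
      have : γ ≤ N a / D a := Finset.inf'_le _ (Finset.mem_univ a)
      rw [le_div_iff₀ (hD a)] at this
      linarith
end

section
/- Let S be a finite nonempty set and N, D : S → ℝ with D(a) > 0 for all a. Let γ* = min_a N(a)/D(a). Suppose γ ≥ γ*, let a* be a minimizer of N(a) − γ·D(a) over S, and define γ' = N(a*)/D(a*). Then γ* ≤ γ' ≤ γ. -/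
/-- Monotone decrease of the exact Dinkelbach iteration: if γ ≥ γ* and a* minimizes
N(a) − γ·D(a), then γ* ≤ N(a*)/D(a*) ≤ γ. -/
theorem dinkelbach_update_sandwich {S : Type*} [Fintype S] [Nonempty S]
    (N D : S → ℝ) (hD : ∀ a, 0 < D a) (γ : ℝ)
    (hγ : Finset.univ.inf' Finset.univ_nonempty (fun a => N a / D a) ≤ γ)
    (astar : S) (hmin : ∀ a, N astar - γ * D astar ≤ N a - γ * D a) :
    Finset.univ.inf' Finset.univ_nonempty (fun a => N a / D a) ≤ N astar / D astar ∧
      N astar / D astar ≤ γ := by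
  constructor
  · exact Finset.inf'_le _ (Finset.mem_univ astar)
  · obtain ⟨a0, -, ha0⟩ := Finset.exists_mem_eq_inf' Finset.univ_nonempty
      (fun a => N a / D a)
    have h0 : N a0 / D a0 ≤ γ := ha0 ▸ hγ
    have h1 : N a0 - γ * D a0 ≤ 0 := by
      have := (div_le_iff₀ (hD a0)).mp h0
      linarith
    have h2 : N astar - γ * D astar ≤ 0 := le_trans (hmin a0) h1
    rw [div_le_iff₀ (hD astar)]
    linarith
end

section
/- Let S be a finite nonempty set and N, D : S → ℝ with D(a) > 0 for all a, and let γ* = min_a N(a)/D(a). Define the Dinkelbach iteration: given γ_i > γ*, pick a minimizer a_i of N(a) − γ_i·D(a) and set γ_{i+1} = N(a_i)/D(a_i). Then γ_{i+1} − γ* ≤ (1 − D_min/D_max)·(γ_i − γ*), where D_min = min_a D(a) and D_max = max_a D(a). -/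
/-- Linear convergence of the exact Dinkelbach iteration:
γ_{i+1} − γ* ≤ (1 − D_min/D_max)·(γ_i − γ*). -/
theorem dinkelbach_linear_convergence {S : Type*} [Fintype S] [Nonempty S]
    (N D : S → ℝ) (hD : ∀ a, 0 < D a)
    (γi : ℝ)
    (hγ : Finset.univ.inf' Finset.univ_nonempty (fun a => N a / D a) < γi)
    (ai : S) (hmin : ∀ a, N ai - γi * D ai ≤ N a - γi * D a) :
    N ai / D ai - Finset.univ.inf' Finset.univ_nonempty (fun a => N a / D a) ≤
      (1 - (Finset.univ.inf' Finset.univ_nonempty D) /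
           (Finset.univ.sup' Finset.univ_nonempty D)) *
        (γi - Finset.univ.inf' Finset.univ_nonempty (fun a => N a / D a)) := by
  set γs := Finset.univ.inf' Finset.univ_nonempty (fun a => N a / D a) with hγs
  set Dmin := Finset.univ.inf' Finset.univ_nonempty D with hDmin
  set Dmax := Finset.univ.sup' Finset.univ_nonempty D with hDmax
  obtain ⟨astar, -, hstar⟩ :=
    Finset.exists_mem_eq_inf' (Finset.univ_nonempty (α := S)) (fun a => N a / D a)
  have ha : 0 < D ai := hD ai
  have hb : 0 < D astar := hD astar
  have hNstar : N astar = γs * D astar := by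
    rw [hγs, hstar]; field_simp
  have h1 : N ai - γi * D ai ≤ γs * D astar - γi * D astar := by
    have := hmin astar; rw [hNstar] at this; linarith
  have hγpos : 0 < γi - γs := by linarith
  have hmin1 : Dmin ≤ D astar := Finset.inf'_le D (Finset.mem_univ astar)
  have hmin2 : Dmin ≤ D ai := Finset.inf'_le D (Finset.mem_univ ai)
  have hmax1 : D ai ≤ Dmax := Finset.le_sup' D (Finset.mem_univ ai)
  have hmaxpos : 0 < Dmax := lt_of_lt_of_le ha hmax1
  have hminpos : 0 < Dmin :=
    (Finset.lt_inf'_iff _).mpr (fun a _ => hD a)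
  have hr : Dmin / Dmax * Dmax = Dmin := div_mul_cancel₀ _ (ne_of_gt hmaxpos)
  have hrle : Dmin / Dmax ≤ 1 := div_le_one_of_le₀ (le_trans hmin2 hmax1) (le_of_lt hmaxpos)
  have key : N ai - γs * D ai ≤ (1 - Dmin / Dmax) * (γi - γs) * D ai := by
    nlinarith [mul_pos hγpos hb, mul_pos hγpos ha,
      mul_le_mul_of_nonneg_left hmin1 (le_of_lt hγpos),
      mul_le_mul_of_nonneg_left hmax1 (le_of_lt hγpos),
      mul_nonneg (mul_nonneg (le_of_lt hγpos) (sub_nonneg.mpr hrle)) (sub_nonneg.mpr hmax1),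
      mul_pos hminpos hmaxpos]
  have : N ai / D ai - γs = (N ai - γs * D ai) / D ai := by field_simp
  rw [this, div_le_iff₀ ha]
  linarith [key]
end

section
/- Let L : ℝⁿ → ℝⁿ be continuously differentiable with L(x*) = 0 and L'(x*) invertible. Consider the inexact Newton iteration x_{i+1} = x_i + s_i where L'(x_i) s_i = −L(x_i) + r_i with ‖r_i‖ ≤ η·‖L(x_i)‖ for a fixed η ∈ [0, 1). Then there exists a neighborhood U of x* and a norm such that for any x₀ ∈ U, the sequence x_i converges to x*, and ‖L(x_{i+1})‖ is eventually bounded by t·‖L(x_i)‖ for some t < 1. -/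
open Filter

set_option maxHeartbeats 1000000

/-- Inexact Newton convergence (Dembo–Eisenstat–Steihaug): if L is C¹ with a root x*
at which the Jacobian is invertible, then for any forcing constant η ∈ [0,1) there is a
neighborhood U of x* and a rate t < 1 such that every inexact Newton sequence started
in U converges to x*, with ‖L(x_{i+1})‖ eventually bounded by t·‖L(x_i)‖. -/
theorem inexact_newton_convergence {n : ℕ}
    (L : EuclideanSpace ℝ (Fin n) → EuclideanSpace ℝ (Fin n))
    (hL : ContDiff ℝ 1 L)
    (xstar : EuclideanSpace ℝ (Fin n)) (hroot : L xstar = 0)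
    (hinv : ∃ J : EuclideanSpace ℝ (Fin n) ≃L[ℝ] EuclideanSpace ℝ (Fin n),
      (J : EuclideanSpace ℝ (Fin n) →L[ℝ] EuclideanSpace ℝ (Fin n)) = fderiv ℝ L xstar)
    (η : ℝ) (hη0 : 0 ≤ η) (hη1 : η < 1) :
    ∃ U ∈ nhds xstar, ∃ t : ℝ, t < 1 ∧
      ∀ x s r : ℕ → EuclideanSpace ℝ (Fin n),
        x 0 ∈ U →
        (∀ i, x (i + 1) = x i + s i) →
        (∀ i, fderiv ℝ L (x i) (s i) = -(L (x i)) + r i) →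
        (∀ i, ‖r i‖ ≤ η * ‖L (x i)‖) →
        Tendsto x atTop (nhds xstar) ∧
          (∀ᶠ i in atTop, ‖L (x (i + 1))‖ ≤ t * ‖L (x i)‖) := by
  classical
  obtain ⟨J, hJ⟩ := hinv
  set A : EuclideanSpace ℝ (Fin n) →L[ℝ] EuclideanSpace ℝ (Fin n) := fderiv ℝ L xstar with hA
  set c : ℝ := ‖(J.symm : EuclideanSpace ℝ (Fin n) →L[ℝ] EuclideanSpace ℝ (Fin n))‖ with hc
  have hc0 : 0 ≤ c := norm_nonneg _
  have hAv : ∀ v : EuclideanSpace ℝ (Fin n), ‖v‖ ≤ c * ‖A v‖ := by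
    intro v
    have hv : (J.symm : EuclideanSpace ℝ (Fin n) →L[ℝ] EuclideanSpace ℝ (Fin n)) (A v) = v := by
      rw [← hJ]; exact J.symm_apply_apply v
    calc ‖v‖ = ‖(J.symm : EuclideanSpace ℝ (Fin n) →L[ℝ] EuclideanSpace ℝ (Fin n)) (A v)‖ := by
          rw [hv]
      _ ≤ c * ‖A v‖ :=
          (J.symm : EuclideanSpace ℝ (Fin n) →L[ℝ] EuclideanSpace ℝ (Fin n)).le_opNorm _
  have hdiff : Differentiable ℝ L := hL.differentiable one_ne_zero
  -- constants
  have h1η : (0:ℝ) < 1 + η := by linarith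
  have h1η' : (0:ℝ) < 1 - η := by linarith
  set ε : ℝ := (1 - η) / (8 * (c + 1) * (1 + η)) with hε
  have hεpos : 0 < ε := by
    apply div_pos h1η'
    positivity
  have hcε : c * ε ≤ 1 / 2 := by
    have h1 : c * ε ≤ (c + 1) * ε := by nlinarith
    have h2 : (c + 1) * ε = (1 - η) / (8 * (1 + η)) := by
      rw [hε, mul_div_assoc', div_eq_div_iff (by positivity) (by positivity)]
      ring
    rw [h2] at h1
    have h3 : (1 - η) / (8 * (1 + η)) ≤ 1 / 2 := by
      rw [div_le_div_iff₀ (by positivity) (by norm_num)]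
      nlinarith
    linarith
  set K : ℝ := 2 * c * (1 + η) with hK
  have hK0 : 0 ≤ K := by positivity
  set t : ℝ := (1 + η) / 2 with ht
  have ht0 : 0 ≤ t := by positivity
  have ht1 : t < 1 := by rw [ht]; linarith
  have hεK : 2 * ε * K ≤ 1 - t := by
    have : 2 * ε * K = 4 * c * (1 + η) * ε := by rw [hK]; ring
    rw [this]
    have h1 : 4 * c * (1 + η) * ε ≤ 4 * (c + 1) * (1 + η) * ε := by nlinarith
    have h2 : 4 * (c + 1) * (1 + η) * ε = (1 - η) / 2 := by
      rw [hε, mul_div_assoc', div_eq_div_iff (by positivity) (by norm_num)]; ring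
    have h3 : 1 - t = (1 - η) / 2 := by rw [ht]; ring
    linarith
  -- neighborhood where derivative is ε-close to A
  have hcont : Continuous (fun y => fderiv ℝ L y) := hL.continuous_fderiv one_ne_zero
  have hev : ∀ᶠ y in nhds xstar, ‖fderiv ℝ L y - A‖ < ε := by
    have hc2 : Continuous (fun y => ‖fderiv ℝ L y - A‖) := (hcont.sub continuous_const).norm
    have h0 : ‖fderiv ℝ L xstar - A‖ < ε := by
      rw [← hA]; simp only [sub_self, norm_zero]; exact hεpos
    exact hc2.continuousAt.eventually_lt continuousAt_const h0
  obtain ⟨δ, hδpos, hδ⟩ := Metric.eventually_nhds_iff.mp hev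
  set D : Set (EuclideanSpace ℝ (Fin n)) := Metric.closedBall xstar (δ / 2) with hD
  have hDsub : ∀ y ∈ D, ‖fderiv ℝ L y - A‖ ≤ ε := by
    intro y hy
    have : dist y xstar < δ := lt_of_le_of_lt (Metric.mem_closedBall.mp hy) (by linarith)
    exact le_of_lt (hδ this)
  have hxstarD : xstar ∈ D := Metric.mem_closedBall_self (by linarith)
  -- Taylor estimate at xstar on D
  have hT0 : ∀ y ∈ D, ‖L y - A (y - xstar)‖ ≤ ε * ‖y - xstar‖ := by
    intro y hy
    have := (convex_closedBall xstar (δ/2)).norm_image_sub_le_of_norm_fderiv_le'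
      (fun z _ => hdiff z) hDsub hxstarD hy
    simpa [hroot, map_sub] using this
  set M : ℝ := ‖A‖ + ε with hM
  have hM0 : 0 ≤ M := by positivity
  have hup : ∀ y ∈ D, ‖L y‖ ≤ M * ‖y - xstar‖ := by
    intro y hy
    calc ‖L y‖ = ‖(L y - A (y - xstar)) + A (y - xstar)‖ := by congr 1; abel
      _ ≤ ‖L y - A (y - xstar)‖ + ‖A (y - xstar)‖ := norm_add_le _ _
      _ ≤ ε * ‖y - xstar‖ + ‖A‖ * ‖y - xstar‖ := by
          gcongr
          · exact hT0 y hy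
          · exact A.le_opNorm _
      _ = M * ‖y - xstar‖ := by rw [hM]; ring
  -- radius of starting neighborhood
  set ρ : ℝ := (δ / 2) / (1 + K * M * (2 / (1 - η))) with hρ
  have hden : (0:ℝ) < 1 + K * M * (2 / (1 - η)) := by positivity
  have hρpos : 0 < ρ := div_pos (by linarith) hden
  have hρδ : ρ ≤ δ / 2 := by
    rw [hρ]
    calc (δ/2) / (1 + K * M * (2 / (1 - η))) ≤ (δ/2) / 1 := by
          apply div_le_div_of_nonneg_left (by linarith) one_pos
          have : 0 ≤ K * M * (2 / (1 - η)) := by positivity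
          linarith
      _ = δ / 2 := by ring
  refine ⟨Metric.ball xstar ρ, Metric.ball_mem_nhds _ hρpos, t, ht1, ?_⟩
  intro x s r hx0 hstep hderiv hres
  -- step bound
  have hsK : ∀ i, x i ∈ D → ‖s i‖ ≤ K * ‖L (x i)‖ := by
    intro i hxi
    have hfε : ‖fderiv ℝ L (x i) - A‖ ≤ ε := hDsub _ hxi
    have hAs : A (s i) = (A - fderiv ℝ L (x i)) (s i) + (-(L (x i)) + r i) := by
      rw [← hderiv i]; simp
    have h1 : ‖A (s i)‖ ≤ ε * ‖s i‖ + (1 + η) * ‖L (x i)‖ := by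
      rw [hAs]
      calc ‖(A - fderiv ℝ L (x i)) (s i) + (-(L (x i)) + r i)‖
          ≤ ‖(A - fderiv ℝ L (x i)) (s i)‖ + ‖-(L (x i)) + r i‖ := norm_add_le _ _
        _ ≤ ‖A - fderiv ℝ L (x i)‖ * ‖s i‖ + (‖L (x i)‖ + ‖r i‖) := by
            gcongr
            · exact (A - fderiv ℝ L (x i)).le_opNorm _
            · calc ‖-(L (x i)) + r i‖ ≤ ‖-(L (x i))‖ + ‖r i‖ := norm_add_le _ _
                _ = ‖L (x i)‖ + ‖r i‖ := by rw [norm_neg]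
        _ ≤ ε * ‖s i‖ + (1 + η) * ‖L (x i)‖ := by
            have := hres i
            have h2 : ‖A - fderiv ℝ L (x i)‖ = ‖fderiv ℝ L (x i) - A‖ := norm_sub_rev _ _
            nlinarith [norm_nonneg (s i)]
    have h2 : ‖s i‖ ≤ c * (ε * ‖s i‖ + (1 + η) * ‖L (x i)‖) := by
      calc ‖s i‖ ≤ c * ‖A (s i)‖ := hAv _
        _ ≤ c * (ε * ‖s i‖ + (1 + η) * ‖L (x i)‖) := by
            apply mul_le_mul_of_nonneg_left h1 hc0
    nlinarith [norm_nonneg (s i), norm_nonneg (L (x i))]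
  -- local contraction
  have hcontr : ∀ i, x i ∈ D → x (i+1) ∈ D → ‖L (x (i+1))‖ ≤ t * ‖L (x i)‖ := by
    intro i hxi hxi1
    have hs : ‖s i‖ ≤ K * ‖L (x i)‖ := hsK i hxi
    have hTa : ‖L (x (i+1)) - L (x i) - (fderiv ℝ L (x i)) (x (i+1) - x i)‖
        ≤ (2 * ε) * ‖x (i+1) - x i‖ := by
      apply (convex_closedBall xstar (δ/2)).norm_image_sub_le_of_norm_fderiv_le'
        (fun z _ => hdiff z) ?_ hxi hxi1
      intro z hz
      calc ‖fderiv ℝ L z - fderiv ℝ L (x i)‖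
          ≤ ‖fderiv ℝ L z - A‖ + ‖A - fderiv ℝ L (x i)‖ := norm_sub_le_norm_sub_add_norm_sub _ _ _
        _ ≤ ε + ε := by
            gcongr
            · exact hDsub z hz
            · rw [norm_sub_rev]; exact hDsub _ hxi
        _ = 2 * ε := by ring
    have hxs : x (i+1) - x i = s i := by rw [hstep i]; abel
    rw [hxs, hderiv i] at hTa
    calc ‖L (x (i+1))‖ = ‖(L (x (i+1)) - L (x i) - (-(L (x i)) + r i)) + r i‖ := by
          congr 1; abel
      _ ≤ ‖L (x (i+1)) - L (x i) - (-(L (x i)) + r i)‖ + ‖r i‖ := norm_add_le _ _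
      _ ≤ 2 * ε * ‖s i‖ + η * ‖L (x i)‖ := add_le_add hTa (hres i)
      _ ≤ 2 * ε * (K * ‖L (x i)‖) + η * ‖L (x i)‖ :=
          add_le_add (mul_le_mul_of_nonneg_left hs (by positivity)) le_rfl
      _ ≤ t * ‖L (x i)‖ := by nlinarith [norm_nonneg (L (x i))]
  -- starting point facts
  have hx0D : x 0 ∈ D := by
    have : dist (x 0) xstar < ρ := Metric.mem_ball.mp hx0
    exact Metric.mem_closedBall.mpr (le_trans (le_of_lt this) hρδ)
  have hL0 : ‖L (x 0)‖ ≤ M * ρ := by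
    have h1 := hup _ hx0D
    have h2 : ‖x 0 - xstar‖ ≤ ρ := by
      rw [← dist_eq_norm]; exact le_of_lt (Metric.mem_ball.mp hx0)
    calc ‖L (x 0)‖ ≤ M * ‖x 0 - xstar‖ := h1
      _ ≤ M * ρ := by gcongr
  have hball : ∀ (z : EuclideanSpace ℝ (Fin n)) (i : ℕ),
      ‖z - xstar‖ ≤ ρ + K * ‖L (x 0)‖ * ((1 - t ^ i) / (1 - t)) → z ∈ D := by
    intro z i hz
    rw [hD, Metric.mem_closedBall, dist_eq_norm]
    have hti : t ^ i ≤ 1 := pow_le_one₀ ht0 ht1.le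
    have hgeo : (1 - t ^ i) / (1 - t) ≤ 1 / (1 - t) :=
      div_le_div_of_nonneg_right (by linarith [pow_nonneg ht0 i]) (by linarith)
    have hgeo0 : (0:ℝ) ≤ (1 - t ^ i) / (1 - t) := div_nonneg (by linarith) (by linarith)
    have h2 : K * ‖L (x 0)‖ * ((1 - t ^ i) / (1 - t)) ≤ K * (M * ρ) * (1 / (1 - t)) :=
      mul_le_mul (mul_le_mul_of_nonneg_left hL0 hK0) hgeo hgeo0 (by positivity)
    have heq : ρ + K * (M * ρ) * (1 / (1 - t)) = δ / 2 := by
      have h1t : 1 - t = (1 - η) / 2 := by rw [ht]; ring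
      rw [h1t, hρ]
      field_simp
    linarith
  -- main induction
  have hmain : ∀ i, ‖L (x i)‖ ≤ t ^ i * ‖L (x 0)‖ ∧
      ‖x i - xstar‖ ≤ ρ + K * ‖L (x 0)‖ * ((1 - t ^ i) / (1 - t)) := by
    intro i
    induction i with
    | zero =>
      constructor
      · simp
      · simp only [pow_zero, sub_self, zero_div, mul_zero, add_zero]
        rw [← dist_eq_norm]; exact le_of_lt (Metric.mem_ball.mp hx0)
    | succ i ih =>
      obtain ⟨ihL, ihx⟩ := ih
      have hxiD : x i ∈ D := hball (x i) i ihx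
      have hs : ‖s i‖ ≤ K * ‖L (x i)‖ := hsK i hxiD
      have hsbound : ‖s i‖ ≤ K * ‖L (x 0)‖ * t ^ i := by
        calc ‖s i‖ ≤ K * ‖L (x i)‖ := hs
          _ ≤ K * (t ^ i * ‖L (x 0)‖) := by gcongr
          _ = K * ‖L (x 0)‖ * t ^ i := by ring
      have hxnext : ‖x (i+1) - xstar‖ ≤ ρ + K * ‖L (x 0)‖ * ((1 - t ^ (i+1)) / (1 - t)) := by
        have h1 : ‖x (i+1) - xstar‖ ≤ ‖x i - xstar‖ + ‖s i‖ := by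
          rw [hstep i]
          calc ‖x i + s i - xstar‖ = ‖(x i - xstar) + s i‖ := by abel_nf
            _ ≤ ‖x i - xstar‖ + ‖s i‖ := norm_add_le _ _
        have hne : (1:ℝ) - t ≠ 0 := ne_of_gt (by linarith)
        have h2 : (1 - t ^ i) / (1 - t) + t ^ i = (1 - t ^ (i+1)) / (1 - t) := by
          field_simp
          ring
        calc ‖x (i+1) - xstar‖ ≤ ‖x i - xstar‖ + ‖s i‖ := h1
          _ ≤ (ρ + K * ‖L (x 0)‖ * ((1 - t ^ i) / (1 - t))) + K * ‖L (x 0)‖ * t ^ i := by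
              gcongr
          _ = ρ + K * ‖L (x 0)‖ * ((1 - t ^ i) / (1 - t) + t ^ i) := by ring
          _ = ρ + K * ‖L (x 0)‖ * ((1 - t ^ (i+1)) / (1 - t)) := by rw [h2]
      have hxnextD : x (i+1) ∈ D := hball (x (i+1)) (i+1) hxnext
      refine ⟨?_, hxnext⟩
      calc ‖L (x (i+1))‖ ≤ t * ‖L (x i)‖ := hcontr i hxiD hxnextD
        _ ≤ t * (t ^ i * ‖L (x 0)‖) := by gcongr
        _ = t ^ (i+1) * ‖L (x 0)‖ := by ring
  have hxD : ∀ i, x i ∈ D := by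
    intro i
    rcases i with _ | i
    · exact hx0D
    · exact hball (x (i+1)) (i+1) (hmain (i+1)).2
  -- convergence
  have hsum : Summable s := by
    apply Summable.of_norm_bounded (((summable_geometric_of_lt_one ht0 ht1).mul_left
      (K * ‖L (x 0)‖)))
    intro i
    calc ‖s i‖ ≤ K * ‖L (x i)‖ := hsK i (hxD i)
      _ ≤ K * (t ^ i * ‖L (x 0)‖) := by gcongr; exact (hmain i).1
      _ = K * ‖L (x 0)‖ * t ^ i := by ring
  obtain ⟨a, ha⟩ := hsum
  have hxeq : ∀ i, x i = x 0 + ∑ j ∈ Finset.range i, s j := by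
    intro i
    induction i with
    | zero => simp
    | succ i ih => rw [hstep i, ih, Finset.sum_range_succ]; abel
  have hxlim : Tendsto x atTop (nhds (x 0 + a)) := by
    have := ha.tendsto_sum_nat.const_add (x 0)
    apply this.congr
    intro i
    exact (hxeq i).symm
  set xinf := x 0 + a with hxinf
  have hxinfD : xinf ∈ D := by
    exact Metric.isClosed_closedBall.mem_of_tendsto hxlim (Eventually.of_forall hxD)
  have hLlim : Tendsto (fun i => L (x i)) atTop (nhds (L xinf)) :=
    (hL.continuous.tendsto xinf).comp hxlim
  have hLzero : Tendsto (fun i => L (x i)) atTop (nhds 0) := by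
    rw [tendsto_zero_iff_norm_tendsto_zero]
    apply squeeze_zero (fun i => norm_nonneg _) (fun i => (hmain i).1)
    have := (tendsto_pow_atTop_nhds_zero_of_lt_one ht0 ht1).mul_const ‖L (x 0)‖
    simpa using this
  have hLxinf : L xinf = 0 := tendsto_nhds_unique hLlim hLzero
  have hxinfeq : xinf = xstar := by
    have h1 : ‖A (xinf - xstar)‖ ≤ ε * ‖xinf - xstar‖ := by
      have h := hT0 xinf hxinfD
      rw [hLxinf, zero_sub, norm_neg] at h
      exact h
    have h2 : ‖xinf - xstar‖ ≤ c * (ε * ‖xinf - xstar‖) := by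
      calc ‖xinf - xstar‖ ≤ c * ‖A (xinf - xstar)‖ := hAv _
        _ ≤ c * (ε * ‖xinf - xstar‖) := mul_le_mul_of_nonneg_left h1 hc0
    have h3 : ‖xinf - xstar‖ ≤ 0 := by nlinarith [norm_nonneg (xinf - xstar)]
    have := le_antisymm h3 (norm_nonneg _)
    rw [norm_eq_zero, sub_eq_zero] at this
    exact this
  rw [hxinfeq] at hxlim
  refine ⟨hxlim, Eventually.of_forall fun i => hcontr i (hxD i) (hxD (i+1))⟩
end

section
/- Let S be a finite nonempty set, N, D : S → ℝ with 0 < D_min ≤ D(a) and N(a) ≥ 0 for all a, and γ* = min_a N(a)/D(a). Suppose γ_i > γ* and let Q_i = min_a (N(a) − γ_i·D(a)) with minimizer a_i. Then Q_i < 0 and γ_i − N(a_i)/D(a_i) = −Q_i/D(a_i), hence γ_i − γ* ≥ −Q_i/D(a_i) > 0. -/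
/-- Quantitative gap relation in Fractional Q-Learning: if γ_i > γ* then
Q_i = min_a (N(a) − γ_i D(a)) < 0, the Dinkelbach step satisfies
γ_i − N(a_i)/D(a_i) = −Q_i/D(a_i), and hence γ_i − γ* ≥ −Q_i/D(a_i) > 0. -/
theorem fql_gap_bound {S : Type*} [Fintype S] [Nonempty S]
    (N D : S → ℝ) (Dmin : ℝ) (hDmin : 0 < Dmin) (hD : ∀ a, Dmin ≤ D a)
    (hN : ∀ a, 0 ≤ N a)
    (γi : ℝ)
    (hγ : Finset.univ.inf' Finset.univ_nonempty (fun a => N a / D a) < γi)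
    (ai : S) (hmin : ∀ a, N ai - γi * D ai ≤ N a - γi * D a) :
    Finset.univ.inf' Finset.univ_nonempty (fun a => N a - γi * D a) < 0 ∧
      γi - N ai / D ai =
        -(Finset.univ.inf' Finset.univ_nonempty (fun a => N a - γi * D a)) / D ai ∧
      -(Finset.univ.inf' Finset.univ_nonempty (fun a => N a - γi * D a)) / D ai ≤
        γi - Finset.univ.inf' Finset.univ_nonempty (fun a => N a / D a) ∧
      0 < -(Finset.univ.inf' Finset.univ_nonempty (fun a => N a - γi * D a)) / D ai := by
  have hDpos : ∀ a, 0 < D a := fun a => lt_of_lt_of_le hDmin (hD a)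
  -- Q = N ai - γi * D ai
  have hQ : Finset.univ.inf' Finset.univ_nonempty (fun a => N a - γi * D a)
      = N ai - γi * D ai := by
    apply le_antisymm
    · exact Finset.inf'_le _ (Finset.mem_univ ai)
    · exact Finset.le_inf' _ _ fun a _ => hmin a
  -- γ* is attained at some a*
  obtain ⟨astar, -, hstar⟩ := Finset.exists_mem_eq_inf' (Finset.univ_nonempty (α := S))
    (fun a => N a / D a)
  have hQneg : Finset.univ.inf' Finset.univ_nonempty (fun a => N a - γi * D a) < 0 := by
    have h1 : N astar / D astar < γi := hstar ▸ hγ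
    have h2 : N astar - γi * D astar < 0 := by
      have := (div_lt_iff₀ (hDpos astar)).mp h1
      linarith
    exact lt_of_le_of_lt (Finset.inf'_le _ (Finset.mem_univ astar)) h2
  have heq : γi - N ai / D ai =
      -(Finset.univ.inf' Finset.univ_nonempty (fun a => N a - γi * D a)) / D ai := by
    rw [hQ, neg_sub, sub_div, mul_div_assoc, div_self (ne_of_gt (hDpos ai)), mul_one]
  have hle : Finset.univ.inf' Finset.univ_nonempty (fun a => N a / D a) ≤ N ai / D ai :=
    Finset.inf'_le _ (Finset.mem_univ ai)
  refine ⟨hQneg, heq, ?_, ?_⟩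
  · rw [← heq]; linarith
  · exact div_pos (by linarith) (hDpos ai)
end
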